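/- Let d ≥ 3 be odd, so ρ = (d−1)/2 is a positive integer. Let ψ be a Schwartz function on ℝ whose Fourier transform ψ̂ is supported in the annulus {r : c ≤ |r| ≤ C} for some 0 < c < C. For Λ > 1 and k ∈ ℤ define K_{Λ,k}(r) = (2π)^{−1/2} · ((−1/(2π sinh r)) d/dr)^{ρ} [ ψ̂(2^{−k} r) e^{irΛ} + ψ̂(−2^{−k} r) e^{−irΛ} ] for r > 0. Then there exists a constant A, depending only on d, ψ, such that for all Λ > 1, all k with 2^k ≥ Λ^{−1}, and all r > 0: |K_{Λ,k}(r)| ≤ A · (Λ / sinh(c·2^k))^{ρ} · [ 𝟙_{c·2^k ≤ r ≤ C·2^k} + 𝟙_{r ≤ c·2^k} · (2^{−k} Λ^{−1})^{10} ]. -/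

import Mathlib

noncomputable section

open Complex

namespace HypKernel

/-- The operator `g ↦ (-1/(2π sinh r)) ∂_r g` appearing in the formula for radial
convolution kernels on odd-dimensional hyperbolic space. -/
def hypDeriv (g : ℝ → ℂ) : ℝ → ℂ :=
  fun r => (((-1 : ℝ) / (2 * Real.pi * Real.sinh r) : ℝ) : ℂ) * deriv g r

/-- The convolution kernel `K_{Λ,k}` of the radial multiplier
`2^k ψ(2^k(λ-Λ)) + 2^k ψ(2^k(-λ-Λ))` on `ℍ^d` for odd `d = 2ρ+1`, given by the
explicit formula `K(r) = (2π)^{-1/2} ((-1/(2π sinh r)) ∂_r)^ρ m̂(r)`. -/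
def kernelK (ρ : ℕ) (ψ : SchwartzMap ℝ ℂ) (Λ : ℝ) (k : ℤ) (r : ℝ) : ℂ :=
  (((2 * Real.pi) ^ (-(1:ℝ)/2) : ℝ) : ℂ) *
    (hypDeriv^[ρ] (fun t =>
      VectorFourier.fourierIntegral Real.fourierChar MeasureTheory.volume (innerₗ ℝ) (fun u => ψ u) ((2:ℝ) ^ (-k) * t) *
        Complex.exp (I * (t : ℂ) * (Λ : ℂ)) +
      VectorFourier.fourierIntegral Real.fourierChar MeasureTheory.volume (innerₗ ℝ) (fun u => ψ u) (-((2:ℝ) ^ (-k) * t)) *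
        Complex.exp (-(I * (t : ℂ) * (Λ : ℂ))))) r

namespace Aux

def cothC (t : ℝ) : ℂ := ((Real.cosh t / Real.sinh t : ℝ) : ℂ)
def invS (t : ℝ) : ℂ := (((Real.sinh t)⁻¹ : ℝ) : ℂ)

def term (δ μ : ℝ) (φ : ℝ → ℂ) (p : ℂ × ℕ × ℕ) (t : ℝ) : ℂ :=
  p.1 * cothC t ^ p.2.1 * iteratedDeriv p.2.2 φ (δ * t) * Complex.exp (I * (t : ℂ) * (μ : ℂ))

def dTerms (δ μ : ℝ) (p : ℂ × ℕ × ℕ) : List (ℂ × ℕ × ℕ) :=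
  [((p.2.1 : ℂ) * p.1, p.2.1 - 1, p.2.2),
   (-((p.2.1 : ℂ) * p.1), p.2.1 + 1, p.2.2),
   ((δ : ℂ) * p.1, p.2.1, p.2.2 + 1),
   (I * (μ : ℂ) * p.1, p.2.1, p.2.2)]

def newList (δ μ : ℝ) (n : ℕ) (L : List (ℂ × ℕ × ℕ)) : List (ℂ × ℕ × ℕ) :=
  ((L.map fun p : ℂ × ℕ × ℕ => (-(n : ℂ) * p.1, p.2.1 + 1, p.2.2)) ++ L.flatMap (dTerms δ μ)).map
    fun q : ℂ × ℕ × ℕ => (-(1 / (2 * (Real.pi : ℂ))) * q.1, q.2)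

def repP (δ μ : ℝ) (φ : ℝ → ℂ) (G : ℝ → ℂ) (n : ℕ) (L : List (ℂ × ℕ × ℕ)) : Prop :=
  ∀ t : ℝ, 0 < t → hypDeriv^[n] G t = invS t ^ n * (L.map fun p => term δ μ φ p t).sum

def good (E : ℝ) (n : ℕ) (L : List (ℂ × ℕ × ℕ)) : Prop :=
  L.length ≤ 5 ^ n ∧ ∀ p ∈ L, p.2.1 ≤ n ∧ p.2.2 ≤ n ∧
    ‖p.1‖ * E ^ p.2.1 ≤ (n.factorial : ℝ) * E ^ n

variable {δ μ : ℝ} {φ : ℝ → ℂ}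

lemma itd (hφ : ContDiff ℝ (⊤:ℕ∞) φ) (j : ℕ) (x : ℝ) :
    HasDerivAt (iteratedDeriv j φ) (iteratedDeriv (j + 1) φ x) x := by
  have h1 : ContDiff ℝ (⊤:ℕ∞) (iteratedDeriv j φ) := by
    rw [iteratedDeriv_eq_iterate]
    exact ContDiff.iterate_deriv j hφ
  have h2 : DifferentiableAt ℝ (iteratedDeriv j φ) x :=
    (h1.differentiable (by simp)).differentiableAt
  have h3 : deriv (iteratedDeriv j φ) x = iteratedDeriv (j + 1) φ x := by
    rw [iteratedDeriv_succ]
  exact h3 ▸ h2.hasDerivAt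

lemma hasDerivAt_cothC {t : ℝ} (ht : 0 < t) :
    HasDerivAt cothC (1 - cothC t ^ 2) t := by
  have hs : Real.sinh t ≠ 0 := ne_of_gt (Real.sinh_pos_iff.2 ht)
  have h : HasDerivAt (fun x => Real.cosh x / Real.sinh x)
      ((Real.sinh t * Real.sinh t - Real.cosh t * Real.cosh t) / Real.sinh t ^ 2) t :=
    (Real.hasDerivAt_cosh t).div (Real.hasDerivAt_sinh t) hs
  have key : (Real.sinh t * Real.sinh t - Real.cosh t * Real.cosh t) / Real.sinh t ^ 2
      = 1 - (Real.cosh t / Real.sinh t) ^ 2 := by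
    field_simp
  rw [key] at h
  have h2 := h.ofReal_comp (z := t)
  convert h2 using 1
  · rfl
  simp only [cothC]
  push_cast
  ring

lemma hasDerivAt_E (μ : ℝ) (t : ℝ) :
    HasDerivAt (fun x : ℝ => Complex.exp (I * (x : ℂ) * (μ : ℂ)))
      (I * (μ : ℂ) * Complex.exp (I * (t : ℂ) * (μ : ℂ))) t := by
  have h0 : HasDerivAt (fun x : ℝ => ((x : ℝ) : ℂ)) 1 t := (hasDerivAt_id t).ofReal_comp
  have h1 := (h0.const_mul I).mul_const ((μ : ℝ) : ℂ)
  have h2 := h1.cexp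
  convert h2 using 1
  ring

lemma hasDerivAt_Phi (hφ : ContDiff ℝ (⊤:ℕ∞) φ) (j : ℕ) {t : ℝ} :
    HasDerivAt (fun x : ℝ => iteratedDeriv j φ (δ * x))
      (δ • iteratedDeriv (j + 1) φ (δ * t)) t := by
  have hin : HasDerivAt (fun x : ℝ => δ * x) δ t := by
    simpa using (hasDerivAt_id t).const_mul δ
  exact (itd hφ (j := j) (x := δ * t)).scomp t hin

lemma hasDerivAt_term (hφ : ContDiff ℝ (⊤:ℕ∞) φ) (p : ℂ × ℕ × ℕ) {t : ℝ} (ht : 0 < t) :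
    HasDerivAt (fun x => term δ μ φ p x)
      (((dTerms δ μ p).map fun q => term δ μ φ q t).sum) t := by
  obtain ⟨a, b, j⟩ := p
  have hv := hasDerivAt_cothC ht
  have hvb := (hasDerivAt_pow b (cothC t)).scomp t hv
  have h1 := hvb.const_mul a
  have h2 := h1.mul (hasDerivAt_Phi (δ := δ) hφ j (t := t))
  have h3 := h2.mul (hasDerivAt_E μ t)
  convert h3 using 1
  · rfl
  · rfl
  simp only [dTerms, List.map_cons, List.map_nil, List.sum_cons, List.sum_nil, term,
    Complex.real_smul, smul_eq_mul, Function.comp, Pi.mul_apply]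
  cases b with
  | zero => push_cast; simp; ring
  | succ m => push_cast [Nat.succ_sub_one]; ring

lemma hasDerivAt_sum (hφ : ContDiff ℝ (⊤:ℕ∞) φ) (L : List (ℂ × ℕ × ℕ)) {t : ℝ} (ht : 0 < t) :
    HasDerivAt (fun x => (L.map fun p => term δ μ φ p x).sum)
      (((L.flatMap (dTerms δ μ)).map fun q => term δ μ φ q t).sum) t := by
  induction L with
  | nil => simpa using hasDerivAt_const t (0 : ℂ)
  | cons p L ih =>
    simp only [List.map_cons, List.sum_cons, List.flatMap_cons, List.map_append,
      List.sum_append]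
    exact (hasDerivAt_term hφ p ht).add ih

lemma hasDerivAt_invS_pow (n : ℕ) {t : ℝ} (ht : 0 < t) :
    HasDerivAt (fun x => invS x ^ n) (-(n : ℂ) * cothC t * invS t ^ n) t := by
  have hs : Real.sinh t ≠ 0 := ne_of_gt (Real.sinh_pos_iff.2 ht)
  have hinv : HasDerivAt (fun x => (Real.sinh x)⁻¹) (-(Real.cosh t) / Real.sinh t ^ 2) t :=
    (Real.hasDerivAt_sinh t).inv hs
  have hC : HasDerivAt invS ((-(Real.cosh t) / Real.sinh t ^ 2 : ℝ) : ℂ) t :=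
    hinv.ofReal_comp
  have h := (hasDerivAt_pow n (invS t)).scomp t hC
  convert h using 1
  · rfl
  · rfl
  simp only [invS, cothC, smul_eq_mul]
  push_cast
  cases n with
  | zero => simp
  | succ m =>
    rw [Nat.succ_sub_one]
    field_simp
    ring

lemma repP_zero (hφ : ContDiff ℝ (⊤:ℕ∞) φ) :
    repP δ μ φ (fun t => φ (δ * t) * Complex.exp (I * (t : ℂ) * (μ : ℂ))) 0
      [((1 : ℂ), 0, 0)] := by
  intro t ht
  simp [term, iteratedDeriv_zero]

lemma repP_succ (hφ : ContDiff ℝ (⊤:ℕ∞) φ) {G : ℝ → ℂ} {n : ℕ} {L : List (ℂ × ℕ × ℕ)}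
    (hG : repP δ μ φ G n L) : repP δ μ φ G (n + 1) (newList δ μ n L) := by
  intro t ht
  have hs : Real.sinh t ≠ 0 := ne_of_gt (Real.sinh_pos_iff.2 ht)
  set SL : ℝ → ℂ := fun x => (L.map fun p => term δ μ φ p x).sum with hSL
  set S' : ℂ := ((L.flatMap (dTerms δ μ)).map fun q => term δ μ φ q t).sum with hS'
  have hF : HasDerivAt (fun x => invS x ^ n * SL x)
      (-(n : ℂ) * cothC t * invS t ^ n * SL t + invS t ^ n * S') t :=
    (hasDerivAt_invS_pow n ht).mul (hasDerivAt_sum hφ L ht)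
  have hEv : hypDeriv^[n] G =ᶠ[nhds t] fun x => invS x ^ n * SL x := by
    filter_upwards [isOpen_Ioi.mem_nhds (Set.mem_Ioi.2 ht)] with x hx
    exact hG x hx
  rw [Function.iterate_succ_apply']
  show (((-1 : ℝ) / (2 * Real.pi * Real.sinh t) : ℝ) : ℂ) * deriv (hypDeriv^[n] G) t = _
  rw [hEv.deriv_eq, hF.deriv]
  -- compute the sum over the new list
  have hmapA : ((L.map fun p : ℂ × ℕ × ℕ => (-(n : ℂ) * p.1, p.2.1 + 1, p.2.2)).map
      (fun q => term δ μ φ q t)).sum = -(n : ℂ) * cothC t * SL t := by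
    rw [List.map_map]
    have : ((fun q => term δ μ φ q t) ∘ fun p : ℂ × ℕ × ℕ =>
        (-(n : ℂ) * p.1, p.2.1 + 1, p.2.2)) = fun p => (-(n : ℂ) * cothC t) * term δ μ φ p t := by
      funext p
      simp only [Function.comp, term, pow_succ]
      ring
    rw [this, List.sum_map_mul_left]
  have hscale : ∀ (M : List (ℂ × ℕ × ℕ)) (z : ℂ),
      ((M.map fun q : ℂ × ℕ × ℕ => (z * q.1, q.2)).map (fun q => term δ μ φ q t)).sum
        = z * (M.map fun q => term δ μ φ q t).sum := by
    intro M z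
    rw [List.map_map]
    have : ((fun q => term δ μ φ q t) ∘ fun q : ℂ × ℕ × ℕ => (z * q.1, q.2))
        = fun q => z * term δ μ φ q t := by
      funext q
      simp only [Function.comp, term]
      ring
    rw [this, List.sum_map_mul_left]
  rw [newList, hscale, List.map_append, List.sum_append, hmapA]
  push_cast
  have hπ : (Real.pi : ℂ) ≠ 0 := by exact_mod_cast Real.pi_ne_zero
  have hsC : ((Real.sinh t : ℝ) : ℂ) ≠ 0 := by exact_mod_cast hs
  simp only [invS]
  push_cast
  field_simp
  ring

lemma good_zero {E : ℝ} (hE : 1 ≤ E) : good E 0 [((1 : ℂ), 0, 0)] := by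
  constructor
  · simp
  · intro p hp
    simp at hp
    subst hp
    simp

lemma length_flatMap_dTerms (L : List (ℂ × ℕ × ℕ)) :
    (L.flatMap (dTerms δ μ)).length = 4 * L.length := by
  induction L with
  | nil => simp
  | cons p L ih => simp [dTerms, ih]; ring

lemma good_step {E : ℝ} (hE : 1 ≤ E) (hδ : |δ| ≤ E) (hμ : |μ| ≤ E) {n : ℕ}
    {L : List (ℂ × ℕ × ℕ)} (h : good E n L) : good E (n + 1) (newList δ μ n L) := by
  obtain ⟨hlen, hmem⟩ := h
  have hE0 : (0 : ℝ) < E := lt_of_lt_of_le one_pos hE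
  have hE0' : (0 : ℝ) ≤ E := le_of_lt hE0
  have hEp : ∀ m : ℕ, (0 : ℝ) ≤ E ^ m := fun m => pow_nonneg hE0' m
  constructor
  · rw [newList, List.length_map, List.length_append, List.length_map,
      length_flatMap_dTerms]
    calc L.length + 4 * L.length = 5 * L.length := by ring
    _ ≤ 5 * 5 ^ n := by omega
    _ = 5 ^ (n + 1) := by ring
  · intro q hq
    rw [newList, List.mem_map] at hq
    obtain ⟨q', hq', rfl⟩ := hq
    have hznorm : ‖-(1 / (2 * (Real.pi : ℂ)))‖ ≤ 1 := by
      have h2π : (0:ℝ) < 2 * Real.pi := by positivity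
      have heq : (-(1 / (2 * (Real.pi : ℂ)))) = ((-(1 / (2 * Real.pi)) : ℝ) : ℂ) := by
        push_cast; ring
      rw [heq, Complex.norm_real, Real.norm_eq_abs, abs_neg, abs_of_pos (by positivity)]
      rw [div_le_one h2π]
      nlinarith [Real.pi_gt_three]
    have hkey : ∀ b j : ℕ, ∀ a : ℂ, b ≤ n + 1 → j ≤ n + 1 →
        ‖a‖ * E ^ b ≤ ((n+1).factorial : ℝ) * E ^ (n+1) →
        (-(1 / (2 * (Real.pi : ℂ))) * a, b, j).1.normSq = (-(1 / (2 * (Real.pi : ℂ))) * a).normSq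
         := by intro _ _ _ _ _ _; rfl
    clear hkey
    -- show the three conditions for q', then transfer
    have main : q'.2.1 ≤ n + 1 ∧ q'.2.2 ≤ n + 1 ∧
        ‖q'.1‖ * E ^ q'.2.1 ≤ ((n+1).factorial : ℝ) * E ^ (n+1) := by
      rw [List.mem_append] at hq'
      rcases hq' with hq' | hq'
      · rw [List.mem_map] at hq'
        obtain ⟨p, hp, rfl⟩ := hq'
        obtain ⟨hb, hj, ha⟩ := hmem p hp
        refine ⟨by exact Nat.succ_le_succ hb, by exact Nat.le_succ_of_le hj, ?_⟩
        simp only [norm_mul, norm_neg, Complex.norm_natCast]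
        calc (n : ℝ) * ‖p.1‖ * E ^ (p.2.1 + 1) = (n : ℝ) * E * (‖p.1‖ * E ^ p.2.1) := by ring
        _ ≤ (n : ℝ) * E * ((n.factorial : ℝ) * E ^ n) := by
            apply mul_le_mul_of_nonneg_left (hmem p hp).2.2
              (mul_nonneg (n.cast_nonneg) hE0')
        _ = ((n : ℝ) * n.factorial) * E ^ (n + 1) := by ring
        _ ≤ ((n + 1 : ℝ) * n.factorial) * E ^ (n+1) := by
            apply mul_le_mul_of_nonneg_right _ (hEp _)
            apply mul_le_mul_of_nonneg_right _ (by positivity)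
            push_cast; linarith
        _ = ((n+1).factorial : ℝ) * E ^ (n+1) := by
            rw [Nat.factorial_succ]; push_cast; ring
      · rw [List.mem_flatMap] at hq'
        obtain ⟨p, hp, hq'⟩ := hq'
        obtain ⟨hb, hj, ha⟩ := hmem p hp
        have hEpow : E ^ (p.2.1 - 1) ≤ E ^ p.2.1 := pow_le_pow_right₀ hE (Nat.sub_le _ _)
        have hfac : ((n.factorial : ℝ)) * E ^ n ≤ ((n+1).factorial : ℝ) * E ^ (n+1) := by
          rw [Nat.factorial_succ]
          push_cast
          have h1 : E ^ n ≤ E ^ (n+1) := pow_le_pow_right₀ hE (by omega)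
          have h2 : (n.factorial : ℝ) ≤ (n+1 : ℝ) * n.factorial := by
            nlinarith [(by positivity : (0:ℝ) ≤ (n.factorial : ℝ)), (n.cast_nonneg : (0:ℝ) ≤ n)]
          calc (n.factorial : ℝ) * E ^ n ≤ (n.factorial : ℝ) * E ^ (n+1) := by
                apply mul_le_mul_of_nonneg_left h1 (by positivity)
          _ ≤ (n+1 : ℝ) * n.factorial * E ^ (n+1) := by
                apply mul_le_mul_of_nonneg_right h2 (hEp _)
        have hbn : (p.2.1 : ℝ) ≤ n := by exact_mod_cast hb
        have hfacpos : (0:ℝ) ≤ (n.factorial : ℝ) := by positivity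
        simp only [dTerms, List.mem_cons, List.not_mem_nil, or_false] at hq'
        rcases hq' with rfl | rfl | rfl | rfl
        · refine ⟨by exact le_trans (Nat.sub_le _ _) (Nat.le_succ_of_le hb),
            by exact Nat.le_succ_of_le hj, ?_⟩
          simp only [norm_mul, Complex.norm_natCast]
          calc (p.2.1 : ℝ) * ‖p.1‖ * E ^ (p.2.1 - 1)
              ≤ (p.2.1 : ℝ) * ‖p.1‖ * E ^ p.2.1 := by
                apply mul_le_mul_of_nonneg_left hEpow
                  (mul_nonneg (Nat.cast_nonneg _) (norm_nonneg _))
          _ ≤ (n : ℝ) * ((n.factorial : ℝ) * E ^ n) := by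
                rw [mul_assoc]
                apply mul_le_mul hbn ha (mul_nonneg (norm_nonneg _) (hEp _)) (n.cast_nonneg)
          _ ≤ (n+1 : ℝ) * ((n.factorial : ℝ) * E ^ n) := by
                apply mul_le_mul_of_nonneg_right _ (mul_nonneg hfacpos (hEp _))
                linarith
          _ = ((n+1).factorial : ℝ) * E ^ n := by rw [Nat.factorial_succ]; push_cast; ring
          _ ≤ ((n+1).factorial : ℝ) * E ^ (n+1) := by
                apply mul_le_mul_of_nonneg_left (pow_le_pow_right₀ hE (by omega)) (by positivity)
        · refine ⟨by exact Nat.succ_le_succ hb, by exact Nat.le_succ_of_le hj, ?_⟩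
          simp only [norm_neg, norm_mul, Complex.norm_natCast]
          calc (p.2.1 : ℝ) * ‖p.1‖ * E ^ (p.2.1 + 1)
              = E * ((p.2.1 : ℝ) * (‖p.1‖ * E ^ p.2.1)) := by ring
          _ ≤ E * ((n : ℝ) * ((n.factorial : ℝ) * E ^ n)) := by
                apply mul_le_mul_of_nonneg_left _ (le_of_lt hE0)
                apply mul_le_mul hbn ha (mul_nonneg (norm_nonneg _) (hEp _)) (n.cast_nonneg)
          _ ≤ E * ((n+1 : ℝ) * ((n.factorial : ℝ) * E ^ n)) := by
                apply mul_le_mul_of_nonneg_left _ (le_of_lt hE0)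
                apply mul_le_mul_of_nonneg_right _ (mul_nonneg hfacpos (hEp _))
                linarith
          _ = ((n+1).factorial : ℝ) * E ^ (n+1) := by rw [Nat.factorial_succ]; push_cast; ring
        · refine ⟨by exact Nat.le_succ_of_le hb, by exact Nat.succ_le_succ hj, ?_⟩
          simp only [norm_mul, Complex.norm_real, Real.norm_eq_abs]
          calc |δ| * ‖p.1‖ * E ^ p.2.1 ≤ E * ((n.factorial : ℝ) * E ^ n) := by
                rw [mul_assoc]
                apply mul_le_mul hδ ha (mul_nonneg (norm_nonneg _) (hEp _)) (le_of_lt hE0)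
          _ = (n.factorial : ℝ) * E ^ (n+1) := by ring
          _ ≤ ((n+1).factorial : ℝ) * E ^ (n+1) := by
                apply mul_le_mul_of_nonneg_right _ (by positivity)
                exact_mod_cast Nat.cast_le.2 (Nat.factorial_le (by omega))
        · refine ⟨by exact Nat.le_succ_of_le hb, by exact Nat.le_succ_of_le hj, ?_⟩
          simp only [norm_mul, Complex.norm_real, Real.norm_eq_abs, Complex.norm_I, one_mul]
          calc |μ| * ‖p.1‖ * E ^ p.2.1 ≤ E * ((n.factorial : ℝ) * E ^ n) := by
                rw [mul_assoc]
                apply mul_le_mul hμ ha (mul_nonneg (norm_nonneg _) (hEp _)) (le_of_lt hE0)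
          _ = (n.factorial : ℝ) * E ^ (n+1) := by ring
          _ ≤ ((n+1).factorial : ℝ) * E ^ (n+1) := by
                apply mul_le_mul_of_nonneg_right _ (by positivity)
                exact_mod_cast Nat.cast_le.2 (Nat.factorial_le (by omega))
    obtain ⟨h1, h2, h3⟩ := main
    refine ⟨by simpa using h1, by simpa using h2, ?_⟩
    simp only [norm_mul]
    calc ‖-(1 / (2 * (Real.pi : ℂ)))‖ * ‖q'.1‖ * E ^ q'.2.1
        ≤ 1 * ‖q'.1‖ * E ^ q'.2.1 := by
          apply mul_le_mul_of_nonneg_right _ (hEp _)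
          apply mul_le_mul_of_nonneg_right hznorm (norm_nonneg _)
    _ = ‖q'.1‖ * E ^ q'.2.1 := by ring
    _ ≤ _ := h3

lemma exists_rep (hφ : ContDiff ℝ (⊤:ℕ∞) φ) {E : ℝ} (hE : 1 ≤ E) (hδ : |δ| ≤ E)
    (hμ : |μ| ≤ E) (n : ℕ) :
    ∃ L, repP δ μ φ (fun t => φ (δ * t) * Complex.exp (I * (t : ℂ) * (μ : ℂ))) n L ∧
      good E n L := by
  induction n with
  | zero => exact ⟨_, repP_zero hφ, good_zero hE⟩
  | succ m ih =>
    obtain ⟨L, hL, hg⟩ := ih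
    exact ⟨_, repP_succ hφ hL, good_step hE hδ hμ hg⟩

lemma norm_list_sum_le {β : Type*} (L : List β) (f : β → ℂ) (M : ℝ) (hM : 0 ≤ M)
    (h : ∀ p ∈ L, ‖f p‖ ≤ M) : ‖(L.map f).sum‖ ≤ L.length * M := by
  induction L with
  | nil => simp
  | cons p L ih =>
    simp only [List.map_cons, List.sum_cons, List.length_cons]
    calc ‖f p + (L.map f).sum‖ ≤ ‖f p‖ + ‖(L.map f).sum‖ := norm_add_le _ _
    _ ≤ M + L.length * M := add_le_add (h p (by simp)) (ih fun q hq => h q (by simp [hq]))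
    _ = ((L.length + 1 : ℕ) : ℝ) * M := by push_cast; ring

lemma coth_le {t : ℝ} (ht : 0 < t) : Real.cosh t / Real.sinh t ≤ 1 + 1 / t := by
  have hs : 0 < Real.sinh t := Real.sinh_pos_iff.2 ht
  have hst : t ≤ Real.sinh t := Real.self_le_sinh_iff.2 (le_of_lt ht)
  have hcs : Real.cosh t = Real.sinh t + Real.exp (-t) := by
    have := Real.cosh_sub_sinh t
    linarith
  have hexp : Real.exp (-t) ≤ 1 := Real.exp_le_one_iff.2 (by linarith)
  have key : Real.exp (-t) * t ≤ Real.sinh t := by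
    nlinarith [Real.exp_pos (-t)]
  have h3 : Real.exp (-t) ≤ Real.sinh t / t := (le_div_iff₀ ht).2 key
  have h4 : Real.sinh t / t = 1/t * Real.sinh t := by ring
  have h5 : (1 + 1/t) * Real.sinh t = Real.sinh t + 1/t * Real.sinh t := by ring
  rw [div_le_iff₀ hs, hcs]
  linarith

lemma norm_exp_eq_one (t μ : ℝ) : ‖Complex.exp (I * (t : ℂ) * (μ : ℂ))‖ = 1 := by
  rw [Complex.norm_exp]
  simp [Complex.mul_re, Complex.mul_im]

lemma norm_hyp_le (hφ : ContDiff ℝ (⊤:ℕ∞) φ) {G : ℝ → ℂ} {n : ℕ} {L : List (ℂ × ℕ × ℕ)}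
    {E : ℝ} (hE : 1 ≤ E) (hrep : repP δ μ φ G n L) (hgood : good E n L)
    (M : ℝ) (hM : 0 ≤ M) (hMb : ∀ j ≤ n, ∀ x : ℝ, ‖iteratedDeriv j φ x‖ ≤ M)
    {α : ℝ} (hα : 1 ≤ α) {t : ℝ} (ht : 0 < t)
    (hcoth : Real.cosh t / Real.sinh t ≤ α * E) :
    ‖hypDeriv^[n] G t‖ ≤
      (5:ℝ) ^ n * n.factorial * α ^ n * E ^ n * M * ((Real.sinh t)⁻¹) ^ n := by
  have hE0 : (0:ℝ) < E := lt_of_lt_of_le one_pos hE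
  have hs : 0 < Real.sinh t := Real.sinh_pos_iff.2 ht
  have hcoth0 : 0 ≤ Real.cosh t / Real.sinh t :=
    div_nonneg (le_of_lt (Real.cosh_pos t)) (le_of_lt hs)
  rw [hrep t ht, norm_mul]
  have hnormpow : ‖invS t ^ n‖ = ((Real.sinh t)⁻¹) ^ n := by
    rw [norm_pow, invS, Complex.norm_real, Real.norm_eq_abs,
      abs_of_pos (inv_pos.2 hs)]
  rw [hnormpow]
  have hterm : ∀ p ∈ L, ‖term δ μ φ p t‖ ≤ (n.factorial : ℝ) * α ^ n * E ^ n * M := by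
    intro p hp
    obtain ⟨hb, hj, ha⟩ := hgood.2 p hp
    rw [term, norm_mul, norm_mul, norm_exp_eq_one, mul_one, norm_mul, norm_pow]
    have hcothC : ‖cothC t‖ = Real.cosh t / Real.sinh t := by
      rw [cothC, Complex.norm_real, Real.norm_eq_abs, _root_.abs_of_nonneg hcoth0]
    rw [hcothC]
    calc ‖p.1‖ * (Real.cosh t / Real.sinh t) ^ p.2.1 * ‖iteratedDeriv p.2.2 φ (δ * t)‖
        ≤ ‖p.1‖ * (α * E) ^ p.2.1 * M := by
          apply mul_le_mul (mul_le_mul_of_nonneg_left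
            (pow_le_pow_left₀ hcoth0 hcoth _) (norm_nonneg _)) (hMb _ hj _)
            (norm_nonneg _)
          positivity
    _ = α ^ p.2.1 * (‖p.1‖ * E ^ p.2.1) * M := by rw [mul_pow]; ring
    _ ≤ α ^ n * ((n.factorial : ℝ) * E ^ n) * M := by
          apply mul_le_mul_of_nonneg_right _ hM
          apply mul_le_mul (pow_le_pow_right₀ hα hb) ha
            (mul_nonneg (norm_nonneg _) (pow_nonneg (le_of_lt hE0) _)) (by positivity)
    _ = (n.factorial : ℝ) * α ^ n * E ^ n * M := by ring
  have hsum := norm_list_sum_le L (fun p => term δ μ φ p t)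
    ((n.factorial : ℝ) * α ^ n * E ^ n * M) (by positivity) hterm
  calc ((Real.sinh t)⁻¹) ^ n * ‖(L.map fun p => term δ μ φ p t).sum‖
      ≤ ((Real.sinh t)⁻¹) ^ n * (L.length * ((n.factorial : ℝ) * α ^ n * E ^ n * M)) := by
        apply mul_le_mul_of_nonneg_left hsum (by positivity)
  _ ≤ ((Real.sinh t)⁻¹) ^ n * ((5:ℝ) ^ n * ((n.factorial : ℝ) * α ^ n * E ^ n * M)) := by
        apply mul_le_mul_of_nonneg_left _ (by positivity)
        apply mul_le_mul_of_nonneg_right _ (by positivity)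
        exact_mod_cast Nat.cast_le.2 hgood.1
  _ = (5:ℝ) ^ n * n.factorial * α ^ n * E ^ n * M * ((Real.sinh t)⁻¹) ^ n := by ring

lemma iter_zero_of_zero {h : ℝ → ℂ} {U : Set ℝ} (hU : IsOpen U) (h0 : ∀ x ∈ U, h x = 0)
    (n : ℕ) : ∀ t ∈ U, hypDeriv^[n] h t = 0 := by
  induction n with
  | zero => exact h0
  | succ m ih =>
    intro t ht
    rw [Function.iterate_succ_apply']
    show (((-1 : ℝ) / (2 * Real.pi * Real.sinh t) : ℝ) : ℂ) * deriv (hypDeriv^[m] h) t = 0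
    have hEv : hypDeriv^[m] h =ᶠ[nhds t] fun _ => 0 := by
      filter_upwards [hU.mem_nhds ht] with x hx
      exact ih x hx
    rw [hEv.deriv_eq]
    simp

lemma iter_add {G1 G2 : ℝ → ℂ} (hφ : ContDiff ℝ (⊤:ℕ∞) φ)
    (hd1 : ∀ n : ℕ, ∀ t : ℝ, 0 < t → DifferentiableAt ℝ (hypDeriv^[n] G1) t)
    (hd2 : ∀ n : ℕ, ∀ t : ℝ, 0 < t → DifferentiableAt ℝ (hypDeriv^[n] G2) t)
    (n : ℕ) : ∀ t : ℝ, 0 < t →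
      hypDeriv^[n] (fun x => G1 x + G2 x) t = hypDeriv^[n] G1 t + hypDeriv^[n] G2 t := by
  induction n with
  | zero => intro t ht; rfl
  | succ m ih =>
    intro t ht
    rw [Function.iterate_succ_apply', Function.iterate_succ_apply',
      Function.iterate_succ_apply']
    show (((-1 : ℝ) / (2 * Real.pi * Real.sinh t) : ℝ) : ℂ) *
        deriv (hypDeriv^[m] fun x => G1 x + G2 x) t = _
    have hEv : (hypDeriv^[m] fun x => G1 x + G2 x) =ᶠ[nhds t]
        fun x => hypDeriv^[m] G1 x + hypDeriv^[m] G2 x := by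
      filter_upwards [isOpen_Ioi.mem_nhds (Set.mem_Ioi.2 ht)] with x hx
      exact ih x hx
    rw [hEv.deriv_eq, deriv_fun_add (hd1 m t ht) (hd2 m t ht)]
    show _ = (((-1 : ℝ) / (2 * Real.pi * Real.sinh t) : ℝ) : ℂ) * deriv (hypDeriv^[m] G1) t +
      (((-1 : ℝ) / (2 * Real.pi * Real.sinh t) : ℝ) : ℂ) * deriv (hypDeriv^[m] G2) t
    ring

lemma rep_differentiableAt (hφ : ContDiff ℝ (⊤:ℕ∞) φ) {G : ℝ → ℂ} {n : ℕ}
    {L : List (ℂ × ℕ × ℕ)} (hrep : repP δ μ φ G n L) {t : ℝ} (ht : 0 < t) :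
    DifferentiableAt ℝ (hypDeriv^[n] G) t := by
  have hF : HasDerivAt (fun x => invS x ^ n * (L.map fun p => term δ μ φ p x).sum)
      (-(n : ℂ) * cothC t * invS t ^ n * (L.map fun p => term δ μ φ p t).sum +
        invS t ^ n * ((L.flatMap (dTerms δ μ)).map fun q => term δ μ φ q t).sum) t :=
    (hasDerivAt_invS_pow n ht).mul (hasDerivAt_sum hφ L ht)
  have hEv : (fun x => invS x ^ n * (L.map fun p => term δ μ φ p x).sum) =ᶠ[nhds t]
      hypDeriv^[n] G := by
    filter_upwards [isOpen_Ioi.mem_nhds (Set.mem_Ioi.2 ht)] with x hx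
    exact (hrep x hx).symm
  exact (hF.differentiableAt.congr_of_eventuallyEq hEv.symm)

end Aux

open Aux

/-- **Lemma (pointwise kernel bounds, odd dimension).**
Let `d = 2ρ+1 ≥ 3` be odd, and `ψ` a Schwartz function whose Fourier transform is
supported in the annulus `{c ≤ |r| ≤ C}`, `0 < c < C`. Then there is a constant `A`
(depending only on `d`, `ψ`, `c`, `C`) such that for all `Λ > 1`, all `k ∈ ℤ` with
`2^k ≥ Λ⁻¹` and all `r > 0`,
`|K_{Λ,k}(r)| ≤ A (Λ/sinh(c·2^k))^ρ [𝟙_{c·2^k ≤ r ≤ C·2^k} + 𝟙_{r ≤ c·2^k}(2^{-k}Λ⁻¹)^{10}]`. -/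
theorem kernel_pointwise_bound (ρ : ℕ) (hρ : 1 ≤ ρ) (ψ : SchwartzMap ℝ ℂ)
    (c C : ℝ) (hc : 0 < c) (hcC : c < C)
    (hsupp : ∀ r : ℝ, VectorFourier.fourierIntegral Real.fourierChar MeasureTheory.volume (innerₗ ℝ) (fun u => ψ u) r ≠ 0 → c ≤ |r| ∧ |r| ≤ C) :
    ∃ A : ℝ, ∀ Λ : ℝ, 1 < Λ → ∀ k : ℤ, Λ⁻¹ ≤ (2:ℝ) ^ k → ∀ r : ℝ, 0 < r →
      ‖kernelK ρ ψ Λ k r‖ ≤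
        A * (Λ / Real.sinh (c * (2:ℝ) ^ k)) ^ ρ *
          ((if c * (2:ℝ) ^ k ≤ r ∧ r ≤ C * (2:ℝ) ^ k then (1:ℝ) else 0) +
            (if r ≤ c * (2:ℝ) ^ k then (1:ℝ) else 0) * ((2:ℝ) ^ (-k) * Λ⁻¹) ^ 10) := by
  classical
  set φS : SchwartzMap ℝ ℂ := SchwartzMap.fourierTransformCLM ℝ ψ with hφS
  set φ : ℝ → ℂ := ⇑φS with hφdef
  have hφeq : VectorFourier.fourierIntegral Real.fourierChar MeasureTheory.volume (innerₗ ℝ) (fun u => ψ u) = φ := rfl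
  have hφ : ContDiff ℝ (⊤:ℕ∞) φ := φS.smooth ⊤
  have hφ0 : ∀ y : ℝ, |y| < c ∨ C < |y| → φ y = 0 := by
    intro y hy
    by_contra hne
    have := hsupp y (by rw [hφeq]; exact hne)
    rcases hy with hy | hy
    · linarith [this.1]
    · linarith [this.2]
  set M : ℝ := ∑ j ∈ Finset.range (ρ+1), (SchwartzMap.seminorm ℝ 0 j φS : ℝ) with hMdef
  have hM0 : 0 ≤ M := Finset.sum_nonneg fun j _ => apply_nonneg _ _
  have hMb : ∀ j ≤ ρ, ∀ x : ℝ, ‖iteratedDeriv j φ x‖ ≤ M := by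
    intro j hj x
    have h1 : ‖iteratedDeriv j φ x‖ ≤ SchwartzMap.seminorm ℝ 0 j φS := by
      have h2 := SchwartzMap.le_seminorm' (𝕜 := ℝ) 0 j φS x
      simpa using h2
    refine h1.trans ?_
    exact Finset.single_le_sum (f := fun j => (SchwartzMap.seminorm ℝ 0 j φS : ℝ))
      (fun i _ => apply_nonneg _ _) (Finset.mem_range.2 (by omega))
  set α : ℝ := 1 + 1/c with hαdef
  have hα1 : 1 ≤ α := by
    have : 0 < 1/c := by positivity
    simp only [hαdef]; linarith
  have hcoef0 : (0:ℝ) < (2*Real.pi) ^ (-(1:ℝ)/2) := by positivity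
  set B : ℝ := (5:ℝ) ^ ρ * ρ.factorial * α ^ ρ * M with hBdef
  have hB0 : 0 ≤ B := by
    have : (0:ℝ) ≤ α := le_trans zero_le_one hα1
    positivity
  refine ⟨(2*Real.pi) ^ (-(1:ℝ)/2) * (2 * B), ?_⟩
  intro Λ hΛ k hk r hr
  have hΛ0 : (0:ℝ) < Λ := lt_trans one_pos hΛ
  have hE : (1:ℝ) ≤ Λ := le_of_lt hΛ
  have h2k : (0:ℝ) < (2:ℝ) ^ k := zpow_pos (by norm_num) k
  have h2mk0 : (0:ℝ) < (2:ℝ) ^ (-k) := zpow_pos (by norm_num) (-k)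
  have h2mk : (2:ℝ) ^ (-k) ≤ Λ := by
    rw [zpow_neg]
    have h1 := inv_anti₀ (inv_pos.2 hΛ0) hk
    rwa [inv_inv] at h1
  have hck : (0:ℝ) < c * (2:ℝ) ^ k := by positivity
  have hsck : 0 < Real.sinh (c * (2:ℝ) ^ k) := Real.sinh_pos_iff.2 hck
  have hA0 : (0:ℝ) ≤ (2*Real.pi) ^ (-(1:ℝ)/2) * (2 * B) := by positivity
  have hbr0 : (0:ℝ) ≤ (if c * (2:ℝ) ^ k ≤ r ∧ r ≤ C * (2:ℝ) ^ k then (1:ℝ) else 0) +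
      (if r ≤ c * (2:ℝ) ^ k then (1:ℝ) else 0) * ((2:ℝ) ^ (-k) * Λ⁻¹) ^ 10 := by
    have h10 : (0:ℝ) ≤ ((2:ℝ) ^ (-k) * Λ⁻¹) ^ 10 := by positivity
    split_ifs <;> simp <;> positivity
  have hpow0 : (0:ℝ) ≤ (Λ / Real.sinh (c * (2:ℝ) ^ k)) ^ ρ := by positivity
  by_cases hband : c * (2:ℝ) ^ k ≤ r ∧ r ≤ C * (2:ℝ) ^ k
  · -- main band estimate
    set δ1 : ℝ := (2:ℝ) ^ (-k) with hδ1def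
    set δ2 : ℝ := -(2:ℝ) ^ (-k) with hδ2def
    set G1 : ℝ → ℂ := fun t => φ (δ1 * t) * Complex.exp (I * (t:ℂ) * ((Λ:ℝ):ℂ)) with hG1
    set G2 : ℝ → ℂ := fun t => φ (δ2 * t) * Complex.exp (I * (t:ℂ) * ((-Λ:ℝ):ℂ)) with hG2
    have hgeq : (fun t : ℝ =>
        VectorFourier.fourierIntegral Real.fourierChar MeasureTheory.volume (innerₗ ℝ) (fun u => ψ u) ((2:ℝ) ^ (-k) * t) *
          Complex.exp (I * (t : ℂ) * (Λ : ℂ)) +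
        VectorFourier.fourierIntegral Real.fourierChar MeasureTheory.volume (innerₗ ℝ) (fun u => ψ u) (-((2:ℝ) ^ (-k) * t)) *
          Complex.exp (-(I * (t : ℂ) * (Λ : ℂ)))) = fun x => G1 x + G2 x := by
      funext t
      rw [hφeq]
      simp only [hG1, hG2, hδ1def, hδ2def]
      have h1 : -(2:ℝ) ^ (-k) * t = -((2:ℝ) ^ (-k) * t) := by ring
      have h2 : (I * (t:ℂ) * ((-Λ:ℝ):ℂ)) = -(I * (t:ℂ) * ((Λ:ℝ):ℂ)) := by
        push_cast; ring
      rw [h1, h2]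
    have hδ1 : |δ1| ≤ Λ := by rw [hδ1def, abs_of_pos h2mk0]; exact h2mk
    have hδ2 : |δ2| ≤ Λ := by rw [hδ2def, abs_neg, abs_of_pos h2mk0]; exact h2mk
    have hμ1 : |Λ| ≤ Λ := by rw [abs_of_pos hΛ0]
    have hμ2 : |(-Λ:ℝ)| ≤ Λ := by rw [abs_neg, abs_of_pos hΛ0]
    obtain ⟨L1, hrep1, hgood1⟩ := exists_rep (δ := δ1) (μ := Λ) hφ hE hδ1 hμ1 ρ
    obtain ⟨L2, hrep2, hgood2⟩ := exists_rep (δ := δ2) (μ := (-Λ:ℝ)) hφ hE hδ2 hμ2 ρ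
    have hd1 : ∀ n : ℕ, ∀ t : ℝ, 0 < t → DifferentiableAt ℝ (hypDeriv^[n] G1) t := by
      intro n t ht
      obtain ⟨L, hL, _⟩ := exists_rep (δ := δ1) (μ := Λ) hφ hE hδ1 hμ1 n
      exact rep_differentiableAt hφ hL ht
    have hd2 : ∀ n : ℕ, ∀ t : ℝ, 0 < t → DifferentiableAt ℝ (hypDeriv^[n] G2) t := by
      intro n t ht
      obtain ⟨L, hL, _⟩ := exists_rep (δ := δ2) (μ := (-Λ:ℝ)) hφ hE hδ2 hμ2 n
      exact rep_differentiableAt hφ hL ht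
    have hsplit := iter_add hφ hd1 hd2 ρ r hr
    -- coth bound at r
    have hcothr : Real.cosh r / Real.sinh r ≤ α * Λ := by
      have h1 : Real.cosh r / Real.sinh r ≤ 1 + 1/r := coth_le hr
      have h2 : 1/r ≤ 1/(c * (2:ℝ)^k) := one_div_le_one_div_of_le hck hband.1
      have h3 : 1/(c * (2:ℝ)^k) ≤ Λ * (1/c) := by
        rw [one_div, mul_inv, ← zpow_neg]
        calc c⁻¹ * (2:ℝ)^(-k) ≤ c⁻¹ * Λ := by
              apply mul_le_mul_of_nonneg_left h2mk (by positivity)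
        _ = Λ * (1/c) := by ring
      have h4 : 1 + Λ * (1/c) ≤ α * Λ := by
        have : α * Λ = Λ + Λ * (1/c) := by rw [hαdef]; ring
        linarith
      linarith
    have hb1 := norm_hyp_le hφ hE hrep1 hgood1 M hM0 hMb hα1 hr hcothr
    have hb2 := norm_hyp_le hφ hE hrep2 hgood2 M hM0 hMb hα1 hr hcothr
    have hsinhle : Real.sinh (c * (2:ℝ)^k) ≤ Real.sinh r := Real.sinh_le_sinh.2 hband.1
    have hsr : 0 < Real.sinh r := lt_of_lt_of_le hsck hsinhle
    have hinvle : ((Real.sinh r)⁻¹) ^ ρ ≤ ((Real.sinh (c * (2:ℝ)^k))⁻¹) ^ ρ := by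
      apply pow_le_pow_left₀ (inv_nonneg.2 (le_of_lt hsr))
      exact inv_anti₀ hsck hsinhle
    have hKval : kernelK ρ ψ Λ k r = (((2 * Real.pi) ^ (-(1:ℝ)/2) : ℝ) : ℂ) *
        (hypDeriv^[ρ] G1 r + hypDeriv^[ρ] G2 r) := by
      rw [kernelK, hgeq, hsplit]
    have hBnd : ‖kernelK ρ ψ Λ k r‖ ≤
        (2*Real.pi) ^ (-(1:ℝ)/2) * (2 * B) * (Λ / Real.sinh (c * (2:ℝ)^k)) ^ ρ := by
      rw [hKval, norm_mul]
      have hcn : ‖(((2 * Real.pi) ^ (-(1:ℝ)/2) : ℝ) : ℂ)‖ = (2*Real.pi) ^ (-(1:ℝ)/2) := by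
        rw [Complex.norm_real, Real.norm_eq_abs, abs_of_pos hcoef0]
      rw [hcn]
      have hadd : ‖hypDeriv^[ρ] G1 r + hypDeriv^[ρ] G2 r‖ ≤
          2 * (B * Λ ^ ρ * ((Real.sinh (c * (2:ℝ)^k))⁻¹) ^ ρ) := by
        have hsingle : ∀ h : ℂ, ‖h‖ ≤
            (5:ℝ) ^ ρ * ρ.factorial * α ^ ρ * Λ ^ ρ * M * ((Real.sinh r)⁻¹) ^ ρ →
            ‖h‖ ≤ B * Λ ^ ρ * ((Real.sinh (c * (2:ℝ)^k))⁻¹) ^ ρ := by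
          intro h hh
          refine hh.trans ?_
          rw [hBdef]
          calc (5:ℝ) ^ ρ * ρ.factorial * α ^ ρ * Λ ^ ρ * M * ((Real.sinh r)⁻¹) ^ ρ
              = ((5:ℝ) ^ ρ * ρ.factorial * α ^ ρ * M * Λ ^ ρ) * ((Real.sinh r)⁻¹) ^ ρ := by
                ring
          _ ≤ ((5:ℝ) ^ ρ * ρ.factorial * α ^ ρ * M * Λ ^ ρ) *
                ((Real.sinh (c * (2:ℝ)^k))⁻¹) ^ ρ := by
              apply mul_le_mul_of_nonneg_left hinvle
              have hα0 : (0:ℝ) ≤ α := le_trans zero_le_one hα1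
              positivity
          _ = (5:ℝ) ^ ρ * ρ.factorial * α ^ ρ * M * Λ ^ ρ *
                ((Real.sinh (c * (2:ℝ)^k))⁻¹) ^ ρ := by ring
        calc ‖hypDeriv^[ρ] G1 r + hypDeriv^[ρ] G2 r‖
            ≤ ‖hypDeriv^[ρ] G1 r‖ + ‖hypDeriv^[ρ] G2 r‖ := norm_add_le _ _
        _ ≤ B * Λ ^ ρ * ((Real.sinh (c * (2:ℝ)^k))⁻¹) ^ ρ +
              B * Λ ^ ρ * ((Real.sinh (c * (2:ℝ)^k))⁻¹) ^ ρ :=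
            add_le_add (hsingle _ hb1) (hsingle _ hb2)
        _ = 2 * (B * Λ ^ ρ * ((Real.sinh (c * (2:ℝ)^k))⁻¹) ^ ρ) := by ring
      calc (2*Real.pi) ^ (-(1:ℝ)/2) * ‖hypDeriv^[ρ] G1 r + hypDeriv^[ρ] G2 r‖
          ≤ (2*Real.pi) ^ (-(1:ℝ)/2) *
              (2 * (B * Λ ^ ρ * ((Real.sinh (c * (2:ℝ)^k))⁻¹) ^ ρ)) := by
            apply mul_le_mul_of_nonneg_left hadd (le_of_lt hcoef0)
      _ = (2*Real.pi) ^ (-(1:ℝ)/2) * (2 * B) * (Λ ^ ρ * ((Real.sinh (c * (2:ℝ)^k))⁻¹) ^ ρ) := by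
            ring
      _ = (2*Real.pi) ^ (-(1:ℝ)/2) * (2 * B) * (Λ / Real.sinh (c * (2:ℝ)^k)) ^ ρ := by
            rw [div_pow]
            ring
    refine hBnd.trans ?_
    have h1eq : (if c * (2:ℝ) ^ k ≤ r ∧ r ≤ C * (2:ℝ) ^ k then (1:ℝ) else 0) = 1 :=
      if_pos hband
    rw [h1eq]
    have h10 : (0:ℝ) ≤ (if r ≤ c * (2:ℝ) ^ k then (1:ℝ) else 0) *
        ((2:ℝ) ^ (-k) * Λ⁻¹) ^ 10 := by
      split_ifs <;> simp <;> positivity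
    calc (2*Real.pi) ^ (-(1:ℝ)/2) * (2 * B) * (Λ / Real.sinh (c * (2:ℝ)^k)) ^ ρ
        = (2*Real.pi) ^ (-(1:ℝ)/2) * (2 * B) * (Λ / Real.sinh (c * (2:ℝ)^k)) ^ ρ * 1 := by
          ring
    _ ≤ _ := by
          apply mul_le_mul_of_nonneg_left _ (mul_nonneg hA0 hpow0)
          linarith
  · -- off-band: the kernel vanishes
    have hvanish : hypDeriv^[ρ] (fun t =>
        VectorFourier.fourierIntegral Real.fourierChar MeasureTheory.volume (innerₗ ℝ) (fun u => ψ u) ((2:ℝ) ^ (-k) * t) *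
          Complex.exp (I * (t : ℂ) * (Λ : ℂ)) +
        VectorFourier.fourierIntegral Real.fourierChar MeasureTheory.volume (innerₗ ℝ) (fun u => ψ u) (-((2:ℝ) ^ (-k) * t)) *
          Complex.exp (-(I * (t : ℂ) * (Λ : ℂ)))) r = 0 := by
      rcases lt_or_ge r (c * (2:ℝ)^k) with hlow | hge
      · apply iter_zero_of_zero (isOpen_Ioo (a := -(c * (2:ℝ)^k)) (b := c * (2:ℝ)^k)) _ ρ r
          ⟨by linarith, hlow⟩
        intro x hx
        obtain ⟨hx1, hx2⟩ := hx
        have hxabs : |x| < c * (2:ℝ)^k := abs_lt.2 ⟨by linarith, hx2⟩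
        have harg : |(2:ℝ)^(-k) * x| < c := by
          rw [abs_mul, abs_of_pos h2mk0, zpow_neg]
          calc ((2:ℝ)^k)⁻¹ * |x| < ((2:ℝ)^k)⁻¹ * (c * (2:ℝ)^k) := by
                apply mul_lt_mul_of_pos_left hxabs (by positivity)
          _ = c := by field_simp
        have h1 : VectorFourier.fourierIntegral Real.fourierChar MeasureTheory.volume (innerₗ ℝ) (fun u => ψ u) ((2:ℝ)^(-k) * x) = 0 := by
          rw [hφeq]; exact hφ0 _ (Or.inl harg)
        have h2 : VectorFourier.fourierIntegral Real.fourierChar MeasureTheory.volume (innerₗ ℝ) (fun u => ψ u) (-((2:ℝ)^(-k) * x)) = 0 := by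
          rw [hφeq]; apply hφ0 _ (Or.inl _); rwa [abs_neg]
        simp only [h1, h2, zero_mul, add_zero]
      · have hhigh : C * (2:ℝ)^k < r := by
          rcases not_and_or.1 hband with h | h
          · exact absurd hge (not_le.2 (lt_of_not_ge (fun hh => h hh)))
          · exact lt_of_not_ge h
        apply iter_zero_of_zero (isOpen_Ioi (a := C * (2:ℝ)^k)) _ ρ r hhigh
        intro x hx
        rw [Set.mem_Ioi] at hx
        have hC0 : (0:ℝ) < C := lt_trans hc hcC
        have hx0 : 0 < x := lt_trans (mul_pos hC0 h2k) hx
        have harg : C < |(2:ℝ)^(-k) * x| := by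
          rw [abs_mul, abs_of_pos h2mk0, abs_of_pos hx0, zpow_neg]
          have heq : ((2:ℝ)^k)⁻¹ * x = x / (2:ℝ)^k := by ring
          rw [heq, lt_div_iff₀ h2k]
          exact hx
        have h1 : VectorFourier.fourierIntegral Real.fourierChar MeasureTheory.volume (innerₗ ℝ) (fun u => ψ u) ((2:ℝ)^(-k) * x) = 0 := by
          rw [hφeq]; exact hφ0 _ (Or.inr harg)
        have h2 : VectorFourier.fourierIntegral Real.fourierChar MeasureTheory.volume (innerₗ ℝ) (fun u => ψ u) (-((2:ℝ)^(-k) * x)) = 0 := by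
          rw [hφeq]; apply hφ0 _ (Or.inr _); rwa [abs_neg]
        simp only [h1, h2, zero_mul, add_zero]
    have hK0 : ‖kernelK ρ ψ Λ k r‖ = 0 := by
      rw [kernelK, hvanish, mul_zero, norm_zero]
    rw [hK0]
    exact mul_nonneg (mul_nonneg hA0 hpow0) hbr0


end HypKernel
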